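/- Let (Z_i)_{i≥1} be identically distributed nonnegative random variables (no independence assumed) with E[Z₁^s] < ∞ for some 0 < s ≤ 1, and let 0 < r < 1. Then for every integer M ≥ 0 and every x > 0, P( Σ_{i=M+1}^∞ r^i Z_i > x ) ≤ E[Z₁^s] · x^{−s} · (1 − r^{1/2})^{−s} · (1 − r^{s/2})^{−1} · r^{M s/2}. -/
import Mathlib


open MeasureTheory Filter

/-- The tail bound in the proof of Lemma 3.2: for identically distributed nonnegative `Z_i`
with `E[Z₁^s] < ∞` (`0 < s ≤ 1`) and `0 < r < 1`, for every `M ≥ 0` and `x > 0`,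
`P(∑_{i=M+1}^∞ r^i Z_i > x) ≤ E[Z₁^s]·x^{-s}·(1-r^{1/2})^{-s}·(1-r^{s/2})^{-1}·r^{Ms/2}`. -/
theorem geometric_weighted_tail_bound
    {Ω : Type*} [MeasurableSpace Ω] (P : Measure Ω) [IsProbabilityMeasure P]
    (Z : ℕ → Ω → ℝ) (hmeas : ∀ i, Measurable (Z i)) (hpos : ∀ i ω, 0 ≤ Z i ω)
    (hident : ∀ i : ℕ, 1 ≤ i → Measure.map (Z i) P = Measure.map (Z 1) P)
    (s : ℝ) (hs0 : 0 < s) (hs1 : s ≤ 1)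
    (hmom : Integrable (fun ω => Z 1 ω ^ s) P)
    (r : ℝ) (hr0 : 0 < r) (hr1 : r < 1)
    (M : ℕ) (x : ℝ) (hx : 0 < x) :
    (P {ω | ENNReal.ofReal x <
        ∑' i : ℕ, ENNReal.ofReal (r ^ (M + 1 + i) * Z (M + 1 + i) ω)}).toReal ≤
      (∫ ω, Z 1 ω ^ s ∂P) * x ^ (-s) * (1 - r ^ ((1 : ℝ) / 2)) ^ (-s) *
        (1 - r ^ (s / 2))⁻¹ * r ^ ((M : ℝ) * s / 2) := by
  set ρ : ℝ := r ^ ((1:ℝ)/2) with hρdef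
  have hρ0 : 0 < ρ := Real.rpow_pos_of_pos hr0 _
  have hρ1 : ρ < 1 := Real.rpow_lt_one hr0.le hr1 (by norm_num)
  have h1ρ : 0 < 1 - ρ := by linarith
  set q : ℝ := r ^ (s/2) with hqdef
  have hq0 : 0 < q := Real.rpow_pos_of_pos hr0 _
  have hq1 : q < 1 := Real.rpow_lt_one hr0.le hr1 (by positivity)
  have h1q : 0 < 1 - q := by linarith
  set E : ℝ := ∫ ω, Z 1 ω ^ s ∂P with hEdef
  have hZs : ∀ ω, (0:ℝ) ≤ Z 1 ω ^ s := fun ω => Real.rpow_nonneg (hpos 1 ω) s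
  have hE0 : 0 ≤ E := integral_nonneg hZs
  set I : ENNReal := ∫⁻ ω, ENNReal.ofReal (Z 1 ω ^ s) ∂P with hIdef
  have hIE : I = ENNReal.ofReal E := by
    rw [hIdef, hEdef, ← ofReal_integral_eq_lintegral_ofReal hmom (ae_of_all _ hZs)]
  -- the splitting sequence
  set a : ℕ → ℝ := fun i => x * (1 - ρ) * ρ ^ i with hadef
  have ha0 : ∀ i, 0 < a i := fun i => by
    have := pow_pos hρ0 i; positivity
  have hsummable : Summable a :=
    (summable_geometric_of_lt_one hρ0.le hρ1).mul_left _
  have hsum_a : ∑' i, a i = x := by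
    rw [hadef, tsum_mul_left, tsum_geometric_of_lt_one hρ0.le hρ1]
    field_simp
  -- event inclusion
  have hsub : {ω | ENNReal.ofReal x <
        ∑' i : ℕ, ENNReal.ofReal (r ^ (M + 1 + i) * Z (M + 1 + i) ω)}
      ⊆ ⋃ i : ℕ, {ω | a i / r ^ (M + 1 + i) < Z (M + 1 + i) ω} := by
    intro ω hω
    by_contra hcon
    simp only [Set.mem_iUnion, not_exists, Set.mem_setOf_eq, not_lt] at hcon
    simp only [Set.mem_setOf_eq] at hω
    refine absurd hω (not_lt.2 ?_)
    calc ∑' i : ℕ, ENNReal.ofReal (r ^ (M + 1 + i) * Z (M + 1 + i) ω)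
        ≤ ∑' i : ℕ, ENNReal.ofReal (a i) := by
          refine ENNReal.tsum_le_tsum fun i => ENNReal.ofReal_le_ofReal ?_
          have h := (le_div_iff₀ (pow_pos hr0 (M + 1 + i))).1 (hcon i)
          linarith [h, mul_comm (Z (M + 1 + i) ω) (r ^ (M + 1 + i))]
      _ = ENNReal.ofReal x := by
          rw [← hsum_a, ENNReal.ofReal_tsum_of_nonneg (fun i => (ha0 i).le) hsummable]
  -- Markov bound
  have hmarkov : ∀ (t : ℝ), 0 < t → ∀ k : ℕ, 1 ≤ k →
      P {ω | t < Z k ω} ≤ I * ENNReal.ofReal (t ^ (-s)) := by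
    intro t ht k hk
    have hmap : P {ω | t < Z k ω} = P {ω | t < Z 1 ω} := by
      have h1 : P {ω | t < Z k ω} = (P.map (Z k)) (Set.Ioi t) := by
        rw [Measure.map_apply (hmeas k) measurableSet_Ioi]; rfl
      have h2 : P {ω | t < Z 1 ω} = (P.map (Z 1)) (Set.Ioi t) := by
        rw [Measure.map_apply (hmeas 1) measurableSet_Ioi]; rfl
      rw [h1, h2, hident k hk]
    rw [hmap]
    have hts : (0:ℝ) < t ^ s := Real.rpow_pos_of_pos ht s
    have hsubset : {ω | t < Z 1 ω} ⊆
        {ω | ENNReal.ofReal (t ^ s) ≤ ENNReal.ofReal (Z 1 ω ^ s)} := fun ω hω =>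
      ENNReal.ofReal_le_ofReal (Real.rpow_le_rpow ht.le (le_of_lt hω) hs0.le)
    have hmul : ENNReal.ofReal (t ^ s) * P {ω | t < Z 1 ω} ≤ I := by
      refine le_trans ?_ (mul_meas_ge_le_lintegral₀
        (Measurable.aemeasurable (by measurability)) (ENNReal.ofReal (t ^ s)))
      exact mul_le_mul_right (measure_mono hsubset) _
    have hne0 : ENNReal.ofReal (t ^ s) ≠ 0 := by
      simp [ENNReal.ofReal_eq_zero, not_le, hts]
    have hnetop : ENNReal.ofReal (t ^ s) ≠ ⊤ := ENNReal.ofReal_ne_top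
    have : P {ω | t < Z 1 ω} ≤ I * (ENNReal.ofReal (t ^ s))⁻¹ := by
      rw [← div_eq_mul_inv, ENNReal.le_div_iff_mul_le (Or.inl hne0) (Or.inl hnetop), mul_comm]
      exact hmul
    refine this.trans (le_of_eq ?_)
    congr 1
    rw [← ENNReal.ofReal_inv_of_pos hts, ← Real.rpow_neg ht.le]
  -- closed form of the summands
  set K : ℝ := (x * (1 - ρ)) ^ (-s) * r ^ (((M:ℝ) + 1) * s) with hKdef
  have hK0 : 0 < K := by
    have h1 : (0:ℝ) < (x * (1 - ρ)) ^ (-s) :=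
      Real.rpow_pos_of_pos (by positivity) _
    have h2 : (0:ℝ) < r ^ (((M:ℝ) + 1) * s) := Real.rpow_pos_of_pos hr0 _
    positivity
  have hc : ∀ i : ℕ, (a i / r ^ (M + 1 + i)) ^ (-s) = K * q ^ i := by
    intro i
    have hpow : (r:ℝ) ^ (M + 1 + i) = r ^ ((M + 1 + i : ℕ) : ℝ) :=
      (Real.rpow_natCast r _).symm
    have hρi : ρ ^ i = r ^ ((i:ℝ) / 2) := by
      rw [hρdef, ← Real.rpow_natCast (r ^ ((1:ℝ)/2)) i, ← Real.rpow_mul hr0.le]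
      ring_nf
    have hqi : q ^ i = r ^ ((i:ℝ) * (s/2)) := by
      rw [hqdef, ← Real.rpow_natCast (r ^ (s/2)) i, ← Real.rpow_mul hr0.le]
      ring_nf
    have key : a i / r ^ (M + 1 + i)
        = (x * (1 - ρ)) * r ^ ((i:ℝ)/2 - ((M:ℝ) + 1 + i)) := by
      rw [hadef]
      simp only
      rw [hρi, hpow, mul_div_assoc, ← Real.rpow_sub hr0]
      push_cast
      ring_nf
    rw [key, Real.mul_rpow (by positivity) (Real.rpow_nonneg hr0.le _),
      ← Real.rpow_natCast q i, hqdef, ← Real.rpow_mul hr0.le, ← Real.rpow_mul hr0.le,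
      hKdef, mul_assoc, ← Real.rpow_add hr0]
    congr 1
    ring
  have hsummable_c : Summable (fun i : ℕ => K * q ^ i) :=
    (summable_geometric_of_lt_one hq0.le hq1).mul_left _
  have hsum_c : ∑' i : ℕ, K * q ^ i = K * (1 - q)⁻¹ := by
    rw [tsum_mul_left, tsum_geometric_of_lt_one hq0.le hq1]
  -- main chain in ℝ≥0∞
  have hchain : P {ω | ENNReal.ofReal x <
        ∑' i : ℕ, ENNReal.ofReal (r ^ (M + 1 + i) * Z (M + 1 + i) ω)}
      ≤ ENNReal.ofReal (E * (K * (1 - q)⁻¹)) := by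
    calc P {ω | ENNReal.ofReal x <
          ∑' i : ℕ, ENNReal.ofReal (r ^ (M + 1 + i) * Z (M + 1 + i) ω)}
        ≤ P (⋃ i : ℕ, {ω | a i / r ^ (M + 1 + i) < Z (M + 1 + i) ω}) :=
          measure_mono hsub
      _ ≤ ∑' i : ℕ, P {ω | a i / r ^ (M + 1 + i) < Z (M + 1 + i) ω} :=
          measure_iUnion_le _
      _ ≤ ∑' i : ℕ, I * ENNReal.ofReal ((a i / r ^ (M + 1 + i)) ^ (-s)) := by
          refine ENNReal.tsum_le_tsum fun i => hmarkov _ ?_ _ (by omega)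
          exact div_pos (ha0 i) (pow_pos hr0 _)
      _ = I * ∑' i : ℕ, ENNReal.ofReal ((a i / r ^ (M + 1 + i)) ^ (-s)) :=
          ENNReal.tsum_mul_left
      _ = ENNReal.ofReal E * ENNReal.ofReal (∑' i : ℕ, K * q ^ i) := by
          rw [hIE]
          congr 1
          rw [ENNReal.ofReal_tsum_of_nonneg (fun i => by positivity) hsummable_c]
          exact tsum_congr fun i => by rw [hc i]
      _ = ENNReal.ofReal (E * (K * (1 - q)⁻¹)) := by
          rw [hsum_c, ← ENNReal.ofReal_mul hE0]
  have htoReal : (P {ω | ENNReal.ofReal x <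
        ∑' i : ℕ, ENNReal.ofReal (r ^ (M + 1 + i) * Z (M + 1 + i) ω)}).toReal
      ≤ E * (K * (1 - q)⁻¹) := by
    have := ENNReal.toReal_mono ENNReal.ofReal_ne_top hchain
    rwa [ENNReal.toReal_ofReal (by positivity)] at this
  refine htoReal.trans ?_
  -- final real comparison
  have hKexp : K = x ^ (-s) * (1 - ρ) ^ (-s) * r ^ (((M:ℝ) + 1) * s) := by
    rw [hKdef, Real.mul_rpow hx.le h1ρ.le]
  have hrle : r ^ (((M:ℝ) + 1) * s) ≤ r ^ ((M:ℝ) * s / 2) := by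
    refine Real.rpow_le_rpow_of_exponent_ge hr0 hr1.le ?_
    have hM : (0:ℝ) ≤ (M:ℝ) := Nat.cast_nonneg M
    nlinarith
  have hx0 : (0:ℝ) < x ^ (-s) := Real.rpow_pos_of_pos hx _
  have hρ0' : (0:ℝ) < (1 - ρ) ^ (-s) := Real.rpow_pos_of_pos h1ρ _
  rw [hKexp]
  have : E * (x ^ (-s) * (1 - ρ) ^ (-s) * r ^ (((M:ℝ) + 1) * s) * (1 - q)⁻¹)
      ≤ E * (x ^ (-s) * (1 - ρ) ^ (-s) * r ^ ((M:ℝ) * s / 2) * (1 - q)⁻¹) := by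
    gcongr
  linarith [this]
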